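/- Fix b ∈ (0,1), φ ∈ (0,1), h > 1, and consider pairs (x,y) with 1/2 ≤ y ≤ x ≤ 1 satisfying the fixed-point equations x = x^b·A(y) / (x^b·A(y) + (1-x)^b·B(y)) and y = φ·x + (1-φ)·A(y)/(h+1), where A(y) = h·y + 1 - y and B(y) = y + h·(1-y). If 0 < b ≤ 2/(φ·(h-1)+2), the set of solutions is exactly {(1/2, 1/2), (1, (φ·h+1)/(φ·h+2-φ))}; if 2/(φ·(h-1)+2) < b < 1, the set of solutions is exactly {(1/2, 1/2), (1, (φ·h+1)/(φ·h+2-φ)), (x̂(φ,h,b), (φ·(h+1)·x̂(φ,h,b) + 1 - φ)/(φ·h + 2 - φ))}. -/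

import Mathlib

open Filter Topology

/-- Aggregate explicit opinion received from the in-group side:
`A(y) = h·y + 1 - y`. -/
noncomputable def A (h y : ℝ) : ℝ := h * y + 1 - y

/-- Aggregate explicit opinion received from the out-group side:
`B(y) = y + h·(1 - y)`. -/
noncomputable def B (h y : ℝ) : ℝ := y + h * (1 - y)

/-- The function `g(x,b)` of the paper, for `b ∈ (0,1)`:
`g(x,b) = (x^{1-b} - (1-x)^{1-b}) / (x·(1-x)^{1-b} - (1-x)·x^{1-b})` for
`x ∈ (1/2,1)` and `g(1/2,b) = 2/b - 2`. -/
noncomputable def g (x b : ℝ) : ℝ :=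
  if x = 1 / 2 then 2 / b - 2
  else (x ^ (1 - b) - (1 - x) ^ (1 - b)) /
    (x * (1 - x) ^ (1 - b) - (1 - x) * x ^ (1 - b))

noncomputable def psi (b c z : ℝ) : ℝ :=
  (1-b)*(Real.log z - Real.log (1-z)) - Real.log (1+c*z) + Real.log (1+c*(1-z))

lemma psi_hasDeriv (b c z : ℝ) (hz0 : 0 < z) (hz1 : z < 1) (hc : 0 < c) :
    HasDerivAt (psi b c)
      ((1-b)*(1/z + 1/(1-z)) - c/(1+c*z) - c/(1+c*(1-z))) z := by
  have h1 : (0:ℝ) < 1 - z := by linarith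
  have h2 : (0:ℝ) < 1 + c*z := by positivity
  have h3 : (0:ℝ) < 1 + c*(1-z) := by nlinarith
  have d1 : HasDerivAt (fun z : ℝ => Real.log z) (1/z) z := by
    simpa [one_div] using Real.hasDerivAt_log hz0.ne'
  have d2 : HasDerivAt (fun z : ℝ => Real.log (1-z)) (-(1/(1-z))) z := by
    have : HasDerivAt (fun z : ℝ => 1-z) (-1) z := by
      simpa using (hasDerivAt_id z).const_sub (1:ℝ)
    simpa [div_eq_mul_inv] using (this.log h1.ne')
  have d3 : HasDerivAt (fun z : ℝ => Real.log (1+c*z)) (c/(1+c*z)) z := by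
    have : HasDerivAt (fun z : ℝ => 1+c*z) c z := by
      exact (((hasDerivAt_id' z).const_mul c).const_add 1).congr_deriv (by ring)
    simpa using this.log h2.ne'
  have d4 : HasDerivAt (fun z : ℝ => Real.log (1+c*(1-z))) (-(c/(1+c*(1-z)))) z := by
    have : HasDerivAt (fun z : ℝ => 1+c*(1-z)) (-c) z := by
      have : HasDerivAt (fun z : ℝ => 1-z) (-1) z := by
        simpa using (hasDerivAt_id z).const_sub (1:ℝ)
      exact ((this.const_mul c).const_add 1).congr_deriv (by ring)
    have := this.log h3.ne'
    simpa [neg_div] using this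
  have := (((d1.sub d2).const_mul (1-b)).sub d3).add d4
  exact this.congr_deriv (by ring)

lemma psi_deriv_eq (b c z : ℝ) (hz0 : 0 < z) (hz1 : z < 1) (hc : 0 < c) :
    ((1-b)*(1/z + 1/(1-z)) - c/(1+c*z) - c/(1+c*(1-z)))
      * (z*(1-z)*(1+c*z)*(1+c*(1-z)))
      = (1-b)*(1+c) - z*(1-z)*(c*(2+b*c)) := by
  have h1 : (1:ℝ) - z ≠ 0 := by linarith
  have h2 : (1:ℝ) + c*z ≠ 0 := by positivity
  have h3 : (1:ℝ) + c*(1-z) ≠ 0 := by nlinarith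
  have hu : 1/z * z = 1 := one_div_mul_cancel hz0.ne'
  have hv : 1/(1-z) * (1-z) = 1 := one_div_mul_cancel h1
  have hp : c/(1+c*z) * (1+c*z) = c := div_mul_cancel₀ c h2
  have hq : c/(1+c*(1-z)) * (1+c*(1-z)) = c := div_mul_cancel₀ c h3
  linear_combination (1-b)*(1-z)*(1+c*z)*(1+c*(1-z))*hu + (1-b)*z*(1+c*z)*(1+c*(1-z))*hv
    - z*(1-z)*(1+c*(1-z))*hp - z*(1-z)*(1+c*z)*hq

lemma psi_deriv_pos (b c z : ℝ) (hb0 : 0 < b) (hb1 : b < 1) (hc : 0 < c)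
    (hble : b ≤ 2/(c+2)) (hz0 : 1/2 < z) (hz1 : z < 1) :
    0 < (1-b)*(1/z + 1/(1-z)) - c/(1+c*z) - c/(1+c*(1-z)) := by
  have hz0' : (0:ℝ) < z := by linarith
  have h1 : (0:ℝ) < 1 - z := by linarith
  have h2 : (0:ℝ) < 1 + c*z := by positivity
  have h3 : (0:ℝ) < 1 + c*(1-z) := by nlinarith
  have ht : z*(1-z) < 1/4 := by nlinarith
  have hb2 : b*(c+2) ≤ 2 := by
    rw [le_div_iff₀ (by linarith : (0:ℝ) < c+2)] at hble
    linarith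
  have hN : 0 < (1-b)*(1+c) - z*(1-z)*(c*(2+b*c)) := by
    nlinarith [mul_pos (show (0:ℝ) < 1/4 - z*(1-z) by linarith)
        (show (0:ℝ) < c*(2+b*c) by positivity),
      mul_le_mul_of_nonneg_right hb2 (show (0:ℝ) ≤ c+2 by linarith)]
  have := psi_deriv_eq b c z hz0' hz1 hc
  have hD : 0 < z*(1-z)*(1+c*z)*(1+c*(1-z)) := by positivity
  nlinarith [this, hD, hN]

lemma psi_deriv_zero_unique (b c z₁ z₂ : ℝ) (hb0 : 0 < b) (hb1 : b < 1) (hc : 0 < c)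
    (h1a : 1/2 < z₁) (h1b : z₁ < 1) (h2a : 1/2 < z₂) (h2b : z₂ < 1)
    (e1 : (1-b)*(1/z₁ + 1/(1-z₁)) - c/(1+c*z₁) - c/(1+c*(1-z₁)) = 0)
    (e2 : (1-b)*(1/z₂ + 1/(1-z₂)) - c/(1+c*z₂) - c/(1+c*(1-z₂)) = 0) :
    z₁ = z₂ := by
  have k1 := psi_deriv_eq b c z₁ (by linarith) h1b hc
  have k2 := psi_deriv_eq b c z₂ (by linarith) h2b hc
  rw [e1, zero_mul] at k1
  rw [e2, zero_mul] at k2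
  have hs : 0 < c*(2+b*c) := by positivity
  have ht : z₁*(1-z₁) = z₂*(1-z₂) := by
    have : z₁*(1-z₁)*(c*(2+b*c)) = z₂*(1-z₂)*(c*(2+b*c)) := by linarith
    exact mul_right_cancel₀ hs.ne' this
  nlinarith [ht]

lemma psi_half (b c : ℝ) : psi b c (1/2) = 0 := by
  unfold psi
  norm_num

lemma psi_no_root (b c x : ℝ) (hb0 : 0 < b) (hb1 : b < 1) (hc : 0 < c)
    (hble : b ≤ 2/(c+2)) (hx0 : 1/2 < x) (hx1 : x < 1) : psi b c x ≠ 0 := by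
  intro hroot
  obtain ⟨z, hz, hz'⟩ := exists_hasDerivAt_eq_slope (psi b c)
    (fun z => (1-b)*(1/z + 1/(1-z)) - c/(1+c*z) - c/(1+c*(1-z))) hx0
    (fun z hz => (psi_hasDeriv b c z (by rcases hz with ⟨a1,a2⟩; linarith)
      (by rcases hz with ⟨a1,a2⟩; linarith) hc).continuousAt.continuousWithinAt)
    (fun z hz => psi_hasDeriv b c z (by rcases hz with ⟨a1,a2⟩; linarith)
      (by rcases hz with ⟨a1,a2⟩; linarith) hc)
  rw [hroot, psi_half, sub_zero] at hz'
  have := psi_deriv_pos b c z hb0 hb1 hc hble hz.1 (by rcases hz with ⟨a1,a2⟩; linarith)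
  rw [hz'] at this
  simp at this

lemma psi_two_roots_false (b c x₁ x₂ : ℝ) (hb0 : 0 < b) (hb1 : b < 1) (hc : 0 < c)
    (h1a : 1/2 < x₁) (hlt : x₁ < x₂) (h2b : x₂ < 1)
    (e1 : psi b c x₁ = 0) (e2 : psi b c x₂ = 0) : False := by
  have hcont : ∀ a a' : ℝ, 0 < a → a' < 1 →
      ContinuousOn (psi b c) (Set.Icc a a') := by
    intro a a' ha ha' z hz
    exact (psi_hasDeriv b c z (by rcases hz with ⟨u,v⟩; linarith)
      (by rcases hz with ⟨u,v⟩; linarith) hc).continuousAt.continuousWithinAt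
  have hder : ∀ a a' : ℝ, 0 < a → a' < 1 → ∀ z ∈ Set.Ioo a a',
      HasDerivAt (psi b c) ((1-b)*(1/z + 1/(1-z)) - c/(1+c*z) - c/(1+c*(1-z))) z := by
    intro a a' ha ha' z hz
    exact psi_hasDeriv b c z (by rcases hz with ⟨u,v⟩; linarith)
      (by rcases hz with ⟨u,v⟩; linarith) hc
  obtain ⟨z₁, hz₁, hz₁'⟩ := exists_hasDerivAt_eq_zero (f := psi b c)
    (f' := fun z => (1-b)*(1/z + 1/(1-z)) - c/(1+c*z) - c/(1+c*(1-z)))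
    (show (1/2:ℝ) < x₁ from h1a) (hcont _ _ (by norm_num) (by linarith))
    (by rw [psi_half, e1]) (hder _ _ (by norm_num) (by linarith))
  obtain ⟨z₂, hz₂, hz₂'⟩ := exists_hasDerivAt_eq_zero (f := psi b c)
    (f' := fun z => (1-b)*(1/z + 1/(1-z)) - c/(1+c*z) - c/(1+c*(1-z)))
    hlt (hcont _ _ (by linarith) h2b) (by rw [e1, e2]) (hder _ _ (by linarith) h2b)
  have : z₁ = z₂ := psi_deriv_zero_unique b c z₁ z₂ hb0 hb1 hc
    hz₁.1 (by rcases hz₁ with ⟨a1,a2⟩; linarith) (by rcases hz₂ with ⟨a1,a2⟩; linarith)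
    (by rcases hz₂ with ⟨a1,a2⟩; linarith) hz₁' hz₂'
  rcases hz₁ with ⟨b1,b2⟩; rcases hz₂ with ⟨c1,c2⟩; linarith

lemma psi_unique_root (b c x₁ x₂ : ℝ) (hb0 : 0 < b) (hb1 : b < 1) (hc : 0 < c)
    (h1a : 1/2 < x₁) (h1b : x₁ < 1) (h2a : 1/2 < x₂) (h2b : x₂ < 1)
    (e1 : psi b c x₁ = 0) (e2 : psi b c x₂ = 0) : x₁ = x₂ := by
  rcases lt_trichotomy x₁ x₂ with hlt | heq | hgt
  · exact absurd (psi_two_roots_false b c x₁ x₂ hb0 hb1 hc h1a hlt h2b e1 e2) id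
  · exact heq
  · exact absurd (psi_two_roots_false b c x₂ x₁ hb0 hb1 hc h2a hgt h1b e2 e1) id

lemma E_iff_psi (b c x : ℝ) (hx0 : 0 < x) (hx1 : x < 1) (hc : 0 < c) :
    x^(1-b)*(1+c*(1-x)) = (1-x)^(1-b)*(1+c*x) ↔ psi b c x = 0 := by
  have h1x : (0:ℝ) < 1-x := by linarith
  have p1 : (0:ℝ) < 1+c*x := by positivity
  have p2 : (0:ℝ) < 1+c*(1-x) := by positivity
  constructor
  · intro hE
    have := congrArg Real.log hE
    rw [Real.log_mul ((Real.rpow_pos_of_pos hx0 (1-b)).ne') p2.ne',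
      Real.log_mul ((Real.rpow_pos_of_pos h1x (1-b)).ne') p1.ne',
      Real.log_rpow hx0, Real.log_rpow h1x] at this
    unfold psi
    linarith
  · intro hpsi
    have key : (1-b)*Real.log x + Real.log (1+c*(1-x))
        = (1-b)*Real.log (1-x) + Real.log (1+c*x) := by
      unfold psi at hpsi; linarith
    have e1 : x^(1-b) = Real.exp ((1-b)*Real.log x) := by
      rw [Real.rpow_def_of_pos hx0, mul_comm]
    have e2 : (1-x)^(1-b) = Real.exp ((1-b)*Real.log (1-x)) := by
      rw [Real.rpow_def_of_pos h1x, mul_comm]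
    rw [e1, e2, ← Real.exp_log p2, ← Real.exp_log p1, ← Real.exp_add, ← Real.exp_add]
    exact congrArg Real.exp key

lemma g_eq_imp (b c x : ℝ) (hb0 : 0 < b) (hb1 : b < 1) (hc : 0 < c)
    (hx0 : 1/2 < x) (hx1 : x < 1) (hg : g x b = c) : psi b c x = 0 := by
  have hxp : (0:ℝ) < x := by linarith
  have h1x : (0:ℝ) < 1-x := by linarith
  have hv : (0:ℝ) < (1-x)^(1-b) := Real.rpow_pos_of_pos h1x _
  have hne : x ≠ 1/2 := by linarith
  have hm : 0 < x*(1-x)^(1-b) - (1-x)*x^(1-b) := by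
    have hr : 1 < x/(1-x) := (one_lt_div h1x).mpr (by linarith)
    have h2 : (x/(1-x))^(1-b) < (x/(1-x))^(1:ℝ) :=
      Real.rpow_lt_rpow_of_exponent_lt hr (by linarith)
    rw [Real.rpow_one, Real.div_rpow hxp.le h1x.le] at h2
    have := (div_lt_div_iff₀ hv h1x).mp h2
    linarith
  rw [g, if_neg hne, div_eq_iff hm.ne'] at hg
  rw [← E_iff_psi b c x hxp hx1 hc]
  linear_combination hg

lemma core (h φ b x y : ℝ) (hh : 1 < h) (hφ0 : 0 < φ) (hφ1 : φ < 1)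
    (hb0 : 0 < b) (hb1 : b < 1)
    (hy : 1/2 ≤ y) (hyx : y ≤ x) (hx1 : x ≤ 1) :
    (x = x ^ b * A h y / (x ^ b * A h y + (1 - x) ^ b * B h y) ∧
      y = φ * x + (1 - φ) * (A h y / (h + 1)))
    ↔ (y*(φ*h+2-φ) = φ*(h+1)*x + (1-φ) ∧
        (x = 1 ∨ (x < 1 ∧ psi b (φ*(h-1)) x = 0))) := by
  set c := φ*(h-1) with hcdef
  have hc : 0 < c := by simp only [hcdef]; nlinarith
  have hd : (0:ℝ) < φ*h+2-φ := by nlinarith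
  have hx05 : (1:ℝ)/2 ≤ x := le_trans hy hyx
  have hxp : (0:ℝ) < x := by linarith
  have hy1 : y ≤ 1 := le_trans hyx hx1
  have hA : 0 < A h y := by unfold A; nlinarith
  have hB : 0 < B h y := by unfold B; nlinarith
  have hh1 : (h:ℝ)+1 ≠ 0 := by linarith
  have hxb : (0:ℝ) < x^b := Real.rpow_pos_of_pos hxp _
  have hq : (0:ℝ) ≤ (1-x)^b := Real.rpow_nonneg (by linarith) _
  have hD : 0 < x^b * A h y + (1-x)^b * B h y :=
    add_pos_of_pos_of_nonneg (mul_pos hxb hA) (mul_nonneg hq hB.le)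
  -- eq2 equivalence
  have eq2_iff : (y = φ * x + (1 - φ) * (A h y / (h + 1)))
      ↔ y*(φ*h+2-φ) = φ*(h+1)*x + (1-φ) := by
    unfold A
    constructor
    · intro e
      field_simp at e
      linear_combination e
    · intro e
      field_simp
      linear_combination e
  constructor
  · rintro ⟨e1, e2⟩
    have hE2 : y*(φ*h+2-φ) = φ*(h+1)*x + (1-φ) := eq2_iff.mp e2
    refine ⟨hE2, ?_⟩
    rcases eq_or_lt_of_le hx1 with hxe | hxlt
    · exact Or.inl hxe
    right
    refine ⟨hxlt, ?_⟩
    have h1x : (0:ℝ) < 1-x := by linarith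
    have hqp : (0:ℝ) < (1-x)^b := Real.rpow_pos_of_pos h1x _
    have hup : x^(1-b) * x^b = x := by
      rw [← Real.rpow_add hxp]; norm_num
    have hvq : (1-x)^(1-b) * (1-x)^b = 1-x := by
      rw [← Real.rpow_add h1x]; norm_num
    -- E1'
    rw [eq_div_iff hD.ne'] at e1
    have hE1' : x^b * A h y * (1-x) = x * (1-x)^b * B h y := by
      linear_combination -e1
    -- E''
    have hE'' : A h y * ((1-x)^(1-b)) = B h y * (x^(1-b)) := by
      have key : x^b * (1-x)^b * (A h y * ((1-x)^(1-b)))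
          = x^b * (1-x)^b * (B h y * (x^(1-b))) := by
        linear_combination (x^b * A h y)*hvq - ((1-x)^b * B h y)*hup + hE1'
      exact mul_left_cancel₀ (by positivity) key
    -- A', B' values
    have hA' : A h y * (φ*h+2-φ) = (h+1)*(c*x+1) := by
      unfold A; simp only [hcdef]; linear_combination (h-1)*hE2
    have hB' : B h y * (φ*h+2-φ) = (h+1)*(1+c*(1-x)) := by
      unfold B; simp only [hcdef]; linear_combination (1-h)*hE2
    -- E
    rw [← E_iff_psi b c x hxp hxlt hc]
    have t1 : (h+1) * (x^(1-b)*(1+c*(1-x))) = (h+1) * ((1-x)^(1-b)*(1+c*x)) := by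
      linear_combination (-(φ*h+2-φ))*hE'' + ((1-x)^(1-b))*hA' - (x^(1-b))*hB'
    exact mul_left_cancel₀ hh1 t1
  · rintro ⟨hE2, hor⟩
    have e2 : y = φ * x + (1 - φ) * (A h y / (h + 1)) := eq2_iff.mpr hE2
    refine ⟨?_, e2⟩
    rcases hor with hxe | ⟨hxlt, hpsi⟩
    · subst hxe
      rw [show (1:ℝ)-1 = 0 by ring, Real.zero_rpow hb0.ne', Real.one_rpow]
      rw [eq_div_iff (by simpa using hA.ne')]
      ring
    · have h1x : (0:ℝ) < 1-x := by linarith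
      have hqp : (0:ℝ) < (1-x)^b := Real.rpow_pos_of_pos h1x _
      have hup : x^(1-b) * x^b = x := by
        rw [← Real.rpow_add hxp]; norm_num
      have hvq : (1-x)^(1-b) * (1-x)^b = 1-x := by
        rw [← Real.rpow_add h1x]; norm_num
      have hA' : A h y * (φ*h+2-φ) = (h+1)*(c*x+1) := by
        unfold A; simp only [hcdef]; linear_combination (h-1)*hE2
      have hB' : B h y * (φ*h+2-φ) = (h+1)*(1+c*(1-x)) := by
        unfold B; simp only [hcdef]; linear_combination (1-h)*hE2
      have hE : x^(1-b)*(1+c*(1-x)) = (1-x)^(1-b)*(1+c*x) :=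
        (E_iff_psi b c x hxp hxlt hc).mpr hpsi
      have hE'' : A h y * ((1-x)^(1-b)) = B h y * (x^(1-b)) := by
        have t2 : (φ*h+2-φ) * (A h y * ((1-x)^(1-b)))
            = (φ*h+2-φ) * (B h y * (x^(1-b))) := by
          linear_combination (-(h+1))*hE + ((1-x)^(1-b))*hA' - (x^(1-b))*hB'
        exact mul_left_cancel₀ hd.ne' t2
      have hE1' : x^b * A h y * (1-x) = x * (1-x)^b * B h y := by
        linear_combination (x^b * (1-x)^b)*hE'' - (x^b * A h y)*hvq
          + ((1-x)^b * B h y)*hup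
      rw [eq_div_iff hD.ne']
      linear_combination -hE1'


/-- Lemma 3 of the paper: for `b ∈ (0,1)`, `φ ∈ (0,1)`, `h > 1`, the solutions
`(x,y)` with `1/2 ≤ y ≤ x ≤ 1` of the fixed-point equations of the scalar
dual-opinion system are exactly `(1/2,1/2)` and `(1,(φh+1)/(φh+2-φ))` when
`0 < b ≤ 2/(φ(h-1)+2)`, together additionally with
`(x̂(φ,h,b), (φ(h+1)x̂+1-φ)/(φh+2-φ))` when `2/(φ(h-1)+2) < b < 1`. -/
theorem stmt_9 (h φ b xhat : ℝ)
    (hh : 1 < h) (hφ : 0 < φ ∧ φ < 1) (hb : 0 < b ∧ b < 1)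
    (hxhat : 2 / (φ * (h - 1) + 2) < b →
      xhat ∈ Set.Ioo (1 / 2 : ℝ) 1 ∧ g xhat b = φ * (h - 1)) :
    (b ≤ 2 / (φ * (h - 1) + 2) →
      ∀ x y : ℝ, 1 / 2 ≤ y → y ≤ x → x ≤ 1 →
        ((x = x ^ b * A h y / (x ^ b * A h y + (1 - x) ^ b * B h y) ∧
          y = φ * x + (1 - φ) * (A h y / (h + 1))) ↔
          ((x, y) = ((1 / 2 : ℝ), (1 / 2 : ℝ)) ∨
           (x, y) = ((1 : ℝ), (φ * h + 1) / (φ * h + 2 - φ))))) ∧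
    (2 / (φ * (h - 1) + 2) < b →
      ∀ x y : ℝ, 1 / 2 ≤ y → y ≤ x → x ≤ 1 →
        ((x = x ^ b * A h y / (x ^ b * A h y + (1 - x) ^ b * B h y) ∧
          y = φ * x + (1 - φ) * (A h y / (h + 1))) ↔
          ((x, y) = ((1 / 2 : ℝ), (1 / 2 : ℝ)) ∨
           (x, y) = ((1 : ℝ), (φ * h + 1) / (φ * h + 2 - φ)) ∨
           (x, y) = (xhat, (φ * (h + 1) * xhat + 1 - φ) / (φ * h + 2 - φ))))) := by
  obtain ⟨hφ0, hφ1⟩ := hφ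
  obtain ⟨hb0, hb1⟩ := hb
  have hc : 0 < φ*(h-1) := by nlinarith
  have hd : (0:ℝ) < φ*h+2-φ := by nlinarith
  constructor
  · intro hble x y hy hyx hx1
    rw [core h φ b x y hh hφ0 hφ1 hb0 hb1 hy hyx hx1]
    constructor
    · rintro ⟨hE2, hor⟩
      rcases hor with hxe | ⟨hxlt, hpsi⟩
      · right
        subst hxe
        have hyv : y = (φ*h+1)/(φ*h+2-φ) := by
          rw [eq_div_iff hd.ne']; linear_combination hE2
        rw [Prod.mk.injEq]; exact ⟨rfl, hyv⟩
      · rcases eq_or_lt_of_le (le_trans hy hyx) with hhalf | hgt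
        · left
          have hyv : y = 1/2 := by
            apply mul_right_cancel₀ hd.ne'
            rw [hE2, ← hhalf]; ring
          rw [Prod.mk.injEq]; exact ⟨hhalf.symm, hyv⟩
        · exact absurd hpsi
            (psi_no_root b (φ*(h-1)) x hb0 hb1 hc (by exact_mod_cast hble) hgt hxlt)
    · rintro (hpt | hpt) <;> rw [Prod.mk.injEq] at hpt <;> obtain ⟨hxv, hyv⟩ := hpt <;>
        subst hxv <;> subst hyv
      · exact ⟨by ring, Or.inr ⟨by norm_num, psi_half b _⟩⟩
      · refine ⟨?_, Or.inl rfl⟩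
        rw [div_mul_cancel₀ _ hd.ne']; ring
  · intro hblt x y hy hyx hx1
    obtain ⟨⟨hxh0, hxh1⟩, hg⟩ := hxhat hblt
    have hpsihat : psi b (φ*(h-1)) xhat = 0 :=
      g_eq_imp b _ xhat hb0 hb1 hc hxh0 hxh1 hg
    rw [core h φ b x y hh hφ0 hφ1 hb0 hb1 hy hyx hx1]
    constructor
    · rintro ⟨hE2, hor⟩
      rcases hor with hxe | ⟨hxlt, hpsi⟩
      · right; left
        subst hxe
        have hyv : y = (φ*h+1)/(φ*h+2-φ) := by
          rw [eq_div_iff hd.ne']; linear_combination hE2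
        rw [Prod.mk.injEq]; exact ⟨rfl, hyv⟩
      · rcases eq_or_lt_of_le (le_trans hy hyx) with hhalf | hgt
        · left
          have hyv : y = 1/2 := by
            apply mul_right_cancel₀ hd.ne'
            rw [hE2, ← hhalf]; ring
          rw [Prod.mk.injEq]; exact ⟨hhalf.symm, hyv⟩
        · right; right
          have hxv : x = xhat :=
            psi_unique_root b (φ*(h-1)) x xhat hb0 hb1 hc hgt hxlt hxh0 hxh1
              hpsi hpsihat
          subst hxv
          have hyv : y = (φ*(h+1)*x + 1 - φ)/(φ*h+2-φ) := by
            rw [eq_div_iff hd.ne']; linear_combination hE2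
          rw [Prod.mk.injEq]; exact ⟨rfl, hyv⟩
    · rintro (hpt | hpt | hpt) <;> rw [Prod.mk.injEq] at hpt <;> obtain ⟨hxv, hyv⟩ := hpt <;>
        subst hxv <;> subst hyv
      · exact ⟨by ring, Or.inr ⟨by norm_num, psi_half b _⟩⟩
      · refine ⟨?_, Or.inl rfl⟩
        rw [div_mul_cancel₀ _ hd.ne']; ring
      · refine ⟨?_, Or.inr ⟨hxh1, hpsihat⟩⟩
        rw [div_mul_cancel₀ _ hd.ne']; ring
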